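/- For all real numbers a, b > 0 one has a/b + b/a − 2 ≥ (log a − log b)². Equivalently, (a − b)(b⁻¹ − a⁻¹) ≥ (log a − log b)². -/
import Mathlib

lemma sq_le_exp_add_exp_neg (L : ℝ) (hL : 0 ≤ L) :
    L ^ 2 ≤ Real.exp L + Real.exp (-L) - 2 := by
  have h1 : L / 2 ≤ Real.sinh (L / 2) := Real.self_le_sinh_iff.2 (by linarith)
  have h2 : Real.sinh (L / 2) = (Real.exp (L / 2) - Real.exp (-(L / 2))) / 2 :=
    Real.sinh_eq _
  have h3 : Real.exp (L / 2) * Real.exp (-(L / 2)) = 1 := by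
    rw [← Real.exp_add]; simp
  have h4 : Real.exp (L / 2) * Real.exp (L / 2) = Real.exp L := by
    rw [← Real.exp_add]; ring_nf
  have h5 : Real.exp (-(L / 2)) * Real.exp (-(L / 2)) = Real.exp (-L) := by
    rw [← Real.exp_add]; ring_nf
  nlinarith [h1, h2, h3, h4, h5, hL, Real.exp_pos (L / 2), Real.exp_pos (-(L / 2))]

lemma key (L : ℝ) : L ^ 2 ≤ Real.exp L + Real.exp (-L) - 2 := by
  rcases le_total 0 L with h | h
  · exact sq_le_exp_add_exp_neg L h
  · have := sq_le_exp_add_exp_neg (-L) (by linarith)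
    simpa [neg_neg, neg_sq, add_comm] using this

/-- For positive reals `a, b`: `a/b + b/a - 2 ≥ (log a - log b)²`, and this
quantity equals `(a - b)(b⁻¹ - a⁻¹)`. -/
theorem log_sq_le (a b : ℝ) (ha : 0 < a) (hb : 0 < b) :
    (Real.log a - Real.log b) ^ 2 ≤ a / b + b / a - 2 ∧
      (a - b) * (b⁻¹ - a⁻¹) = a / b + b / a - 2 := by
  constructor
  · have h1 : Real.exp (Real.log a - Real.log b) = a / b := by
      rw [Real.exp_sub, Real.exp_log ha, Real.exp_log hb]
    have h2 : Real.exp (-(Real.log a - Real.log b)) = b / a := by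
      rw [neg_sub, Real.exp_sub, Real.exp_log ha, Real.exp_log hb]
    have := key (Real.log a - Real.log b)
    rw [h1, h2] at this
    exact this
  · field_simp
    ring
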